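/- In ZM(m,n,r), for divisors m₁ | m, n₁ | n, the Chermak-Delgado measure of H = ⟨a^{m₁}, b^{n₁}⟩ equals m·n²·gcd(m, r^{n₁}−1) / (m₁·n₁·ord_{m/m₁}(r)). -/

import Mathlib

set_option maxHeartbeats 1000000

/-- `ordMod m r` is the multiplicative order of `r` modulo `m`. -/
noncomputable def ordMod (m r : ℕ) : ℕ := orderOf (r : ZMod m)

section ZMaux


set_option linter.unusedSectionVars false
set_option linter.unusedVariables false

variable {G : Type*} [Group G] [Finite G] {m n r : ℕ} {a b : G}

private lemma ZM_comm (hrel : b⁻¹ * a * b = a ^ r) :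
    ∀ k j : ℕ, a ^ k * b ^ j = b ^ j * a ^ (k * r ^ j) := by
  have h1 : ∀ k : ℕ, a ^ k * b = b * a ^ (k * r) := by
    intro k
    have h0 : b⁻¹ * a ^ k * b = a ^ (k * r) := by
      have hc : (b⁻¹ * a * b⁻¹⁻¹) ^ k = b⁻¹ * a ^ k * b⁻¹⁻¹ := conj_pow
      rw [inv_inv] at hc
      have hc : b⁻¹ * a ^ k * b = (b⁻¹ * a * b) ^ k := hc.symm
      rw [hc, hrel, ← pow_mul, mul_comm r k]
    calc a ^ k * b = b * (b⁻¹ * a ^ k * b) := by group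
      _ = b * a ^ (k * r) := by rw [h0]
  intro k j
  induction j with
  | zero => simp
  | succ j ih =>
    calc a ^ k * b ^ (j + 1) = (a ^ k * b ^ j) * b := by rw [pow_succ, mul_assoc]
      _ = b ^ j * (a ^ (k * r ^ j) * b) := by rw [ih, mul_assoc]
      _ = b ^ j * (b * a ^ (k * r ^ j * r)) := by rw [h1]
      _ = b ^ (j + 1) * a ^ (k * r ^ (j + 1)) := by
          rw [pow_succ b, pow_succ r, ← mul_assoc, ← mul_assoc k]

private lemma ZM_normal (hn : 0 < n) (ha : orderOf a = m) (hrel : b⁻¹ * a * b = a ^ r)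
    (hrn : r ^ n % m = 1 % m) (hgen : Subgroup.closure {a, b} = ⊤) (s : ℕ) :
    (Subgroup.zpowers (a ^ s)).Normal := by
  have hmod : r ^ n ≡ 1 [MOD m] := hrn
  rw [← Subgroup.normalizer_eq_top_iff, ← top_le_iff, ← hgen, Subgroup.closure_le]
  refine Set.insert_subset_iff.mpr ⟨?_, Set.singleton_subset_iff.mpr ?_⟩
  · apply Subgroup.mem_normalizer_fintype
    intro y hy
    rw [SetLike.mem_coe, ← mem_powers_iff_mem_zpowers] at hy
    obtain ⟨k, rfl⟩ := hy
    rw [SetLike.mem_coe, ← mem_powers_iff_mem_zpowers]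
    refine ⟨k, ?_⟩
    show (a ^ s) ^ k = a * (a ^ s) ^ k * a⁻¹
    have hc : Commute a ((a ^ s) ^ k) := ((Commute.refl a).pow_right s).pow_right k
    rw [hc.eq, mul_inv_cancel_right]
  · apply Subgroup.mem_normalizer_fintype
    intro y hy
    rw [SetLike.mem_coe, ← mem_powers_iff_mem_zpowers] at hy
    obtain ⟨k, rfl⟩ := hy
    rw [SetLike.mem_coe, ← mem_powers_iff_mem_zpowers]
    refine ⟨k * r ^ (n - 1), ?_⟩
    show (a ^ s) ^ (k * r ^ (n - 1)) = b * (a ^ s) ^ k * b⁻¹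
    have key0 := ZM_comm hrel (s * (k * r ^ (n - 1))) 1
    simp only [pow_one] at key0
    have key : a ^ (s * (k * r ^ (n - 1))) * b = b * a ^ (s * k) := by
      rw [key0]
      congr 1
      rw [pow_eq_pow_iff_modEq, ha]
      calc s * (k * r ^ (n - 1)) * r = s * k * (r ^ (n - 1) * r) := by ring
        _ = s * k * r ^ n := by rw [← pow_succ, Nat.sub_add_cancel hn]
        _ ≡ s * k * 1 [MOD m] := hmod.mul_left _
        _ = s * k := by ring
    rw [← pow_mul, ← pow_mul, ← key, mul_inv_cancel_right]

private lemma ZM_card_closure (hm : 0 < m) (hn : 0 < n) (hgcd1 : Nat.gcd m n = 1)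
    (ha : orderOf a = m) (hb : orderOf b = n)
    {s u : ℕ} (hs : s ∣ m) (hu : u ∣ n) (hNnorm : (Subgroup.zpowers (a ^ s)).Normal) :
    Nat.card (Subgroup.closure {a ^ s, b ^ u} : Subgroup G) = (m / s) * (n / u) := by
  have hs0 : s ≠ 0 := fun h => by subst h; simp at hs; omega
  have hu0 : u ≠ 0 := fun h => by subst h; simp at hu; omega
  set N := Subgroup.zpowers (a ^ s) with hN
  set K := Subgroup.zpowers (b ^ u) with hK
  have hcl : (Subgroup.closure {a ^ s, b ^ u} : Subgroup G) = N ⊔ K := by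
    rw [hN, hK, Subgroup.zpowers_eq_closure, Subgroup.zpowers_eq_closure,
      ← Subgroup.closure_union]
    rfl
  have hcardN : Nat.card N = m / s := by
    rw [hN, Nat.card_zpowers, orderOf_pow_of_dvd hs0 (ha ▸ hs), ha]
  have hcardK : Nat.card K = n / u := by
    rw [hK, Nat.card_zpowers, orderOf_pow_of_dvd hu0 (hb ▸ hu), hb]
  have hcop : Nat.Coprime (Nat.card N) (Nat.card K) := by
    rw [hcardN, hcardK]
    exact Nat.Coprime.coprime_dvd_left (Nat.div_dvd_of_dvd hs)
      (Nat.Coprime.coprime_dvd_right (Nat.div_dvd_of_dvd hu) hgcd1)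
  have hinf : N ⊓ K = ⊥ := Subgroup.inf_eq_bot_of_coprime hcop
  rw [hcl]
  have h1 : Nat.card (N.subgroupOf (N ⊔ K)) * (N.subgroupOf (N ⊔ K)).index
      = Nat.card ↥(N ⊔ K) := Subgroup.card_mul_index _
  have h2 : Nat.card (N.subgroupOf (N ⊔ K)) = Nat.card N :=
    Nat.card_congr (Subgroup.subgroupOfEquivOfLe le_sup_left).toEquiv
  have h3 : (N.subgroupOf (N ⊔ K)).index = Nat.card K := by
    show N.relIndex (N ⊔ K) = _
    rw [sup_comm, Subgroup.relIndex_sup_right, ← Subgroup.inf_relIndex_right, hinf,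
      Subgroup.relIndex_bot_left]
  rw [← h1, h2, h3, hcardN, hcardK]

private lemma mem_centralizer_pair_iff (p q x : G) :
    x ∈ Subgroup.centralizer ((Subgroup.closure {p, q} : Subgroup G) : Set G) ↔
      Commute p x ∧ Commute q x := by
  have hz : ∀ y : G, x ∈ Subgroup.centralizer ((Subgroup.zpowers y : Subgroup G) : Set G)
      ↔ Commute y x := by
    intro y
    rw [Subgroup.mem_centralizer_iff]
    constructor
    · intro h
      exact h y (Subgroup.mem_zpowers y)
    · rintro h g hg
      rw [SetLike.mem_coe, Subgroup.mem_zpowers_iff] at hg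
      obtain ⟨k, rfl⟩ := hg
      exact (h.zpow_left k).eq
  rw [Subgroup.centralizer_closure, Subgroup.mem_centralizer_iff]
  simp only [Set.mem_insert_iff, Set.mem_singleton_iff]
  constructor
  · intro h
    exact ⟨h p (Or.inl rfl), h q (Or.inr rfl)⟩
  · rintro ⟨h1, h2⟩ g (rfl | rfl)
    · exact h1.eq
    · exact h2.eq

private lemma ZM_decomp (hgen : Subgroup.closure {a, b} = ⊤)
    (hNa : (Subgroup.zpowers a).Normal) (x : G) :
    ∃ i j : ℕ, x = a ^ i * b ^ j := by
  have hx : x ∈ ((Subgroup.zpowers a ⊔ Subgroup.zpowers b : Subgroup G) : Set G) := by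
    rw [show Subgroup.zpowers a ⊔ Subgroup.zpowers b = ⊤ from ?_]
    · trivial
    · rw [← hgen, Subgroup.zpowers_eq_closure, Subgroup.zpowers_eq_closure,
        ← Subgroup.closure_union]
      rfl
  rw [Subgroup.normal_mul] at hx
  obtain ⟨y, hy, z, hz, rfl⟩ := hx
  rw [SetLike.mem_coe, ← mem_powers_iff_mem_zpowers] at hy hz
  obtain ⟨i, rfl⟩ := hy
  obtain ⟨j, rfl⟩ := hz
  exact ⟨i, j, rfl⟩

private lemma ZM_centralizer (hm : 0 < m) (hn : 0 < n)
    (ha : orderOf a = m) (hb : orderOf b = n) (hrel : b⁻¹ * a * b = a ^ r)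
    (hrn : r ^ n % m = 1 % m) (hgen : Subgroup.closure {a, b} = ⊤)
    {m₁ n₁ : ℕ} (hm₁ : m₁ ∣ m) (hn₁ : n₁ ∣ n) :
    Subgroup.centralizer ((Subgroup.closure {a ^ m₁, b ^ n₁} : Subgroup G) : Set G) =
      Subgroup.closure {a ^ (m / Nat.gcd m (r ^ n₁ - 1)), b ^ (ordMod (m / m₁) r)} := by
  have hm₁0 : m₁ ≠ 0 := fun h => by subst h; simp at hm₁; omega
  have hn₁0 : n₁ ≠ 0 := fun h => by subst h; simp at hn₁; omega
  have hmod : r ^ n ≡ 1 [MOD m] := hrn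
  have hm1r : m = 1 ∨ 1 ≤ r := by
    rcases Nat.eq_zero_or_pos r with h0 | h1
    · left
      subst h0
      rw [zero_pow hn.ne'] at hmod
      have h0' : 0 % m = 1 % m := hmod
      rw [Nat.zero_mod] at h0'
      exact Nat.dvd_one.mp (Nat.dvd_of_mod_eq_zero h0'.symm)
    · exact Or.inr h1
  set g := Nat.gcd m (r ^ n₁ - 1) with hgdef
  set t := ordMod (m / m₁) r with htdef
  have hgm : g ∣ m := Nat.gcd_dvd_left _ _
  have hgpos : 0 < g := Nat.gcd_pos_of_pos_left _ hm
  have hNa : (Subgroup.zpowers a).Normal := by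
    have := ZM_normal hn ha hrel hrn hgen 1
    rwa [pow_one] at this
  -- the scaled cancellation
  have hscale : ∀ x y : ℕ, (m₁ * x ≡ m₁ * y [MOD m]) ↔ (x ≡ y [MOD m / m₁]) := by
    intro x y
    have hmm : m₁ * (m / m₁) = m := Nat.mul_div_cancel' hm₁
    constructor
    · intro h
      exact Nat.ModEq.mul_left_cancel' hm₁0 (hmm.symm ▸ h)
    · intro h
      have h2 := Nat.ModEq.mul_left' (c := m₁) h
      rwa [hmm] at h2
  have htpow : r ^ t ≡ 1 [MOD m / m₁] := by
    have h := pow_orderOf_eq_one (r : ZMod (m / m₁))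
    rw [← (ZMod.natCast_eq_natCast_iff _ _ _)]
    push_cast
    exact h
  have hjt : ∀ j : ℕ, (r ^ j ≡ 1 [MOD m / m₁]) → t ∣ j := by
    intro j hj
    apply orderOf_dvd_of_pow_eq_one
    have := (ZMod.natCast_eq_natCast_iff _ _ _).mpr hj
    push_cast at this
    exact this
  -- key modular facts about g
  have hC2mod : (m / g) * r ^ n₁ ≡ (m / g) [MOD m] := by
    rcases hm1r with h1 | h1
    · rw [h1]; exact Nat.modEq_one
    · have hp1 : 1 ≤ r ^ n₁ := Nat.one_le_pow _ _ h1
      obtain ⟨kk, hkk⟩ : ∃ kk, r ^ n₁ = 1 + kk := ⟨r ^ n₁ - 1, by omega⟩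
      have hgk : g ∣ kk := by
        have : r ^ n₁ - 1 = kk := by omega
        rw [← this]; exact Nat.gcd_dvd_right _ _
      obtain ⟨q, hq⟩ := hgk
      have he : (m / g) * r ^ n₁ = m / g + m * q := by
        rw [hkk, hq, Nat.mul_add, mul_one, ← mul_assoc, Nat.div_mul_cancel hgm]
      show _ % m = _ % m
      conv_lhs => rw [he]
      exact Nat.add_mul_mod_self_left _ _ _
  have hIdvd : ∀ i : ℕ, (i * r ^ n₁ ≡ i [MOD m]) → m / g ∣ i := by
    intro i hi
    rcases hm1r with h1 | h1
    · have hg1 : g = 1 := by rw [hgdef, h1]; exact Nat.gcd_one_left _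
      rw [h1, hg1]
      exact one_dvd i
    · have hp1 : 1 ≤ r ^ n₁ := Nat.one_le_pow _ _ h1
      obtain ⟨kk, hkk⟩ : ∃ kk, r ^ n₁ = 1 + kk := ⟨r ^ n₁ - 1, by omega⟩
      have hkk1 : r ^ n₁ - 1 = kk := by omega
      have hdvd : m ∣ i * kk := by
        have h3 : i + i * kk ≡ i + 0 [MOD m] := by
          have he : i * (1 + kk) = i + i * kk := by ring
          rw [← he, add_zero, ← hkk]
          exact hi
        exact (Nat.modEq_zero_iff_dvd).mp (Nat.ModEq.add_left_cancel' i h3)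
      have hgk : g ∣ kk := hkk1 ▸ Nat.gcd_dvd_right _ _
      obtain ⟨q, hq⟩ := hgk
      have hmg : m / g ∣ i * q := by
        have h2 : (m / g) * g ∣ (i * q) * g := by
          rw [Nat.div_mul_cancel hgm]
          have he2 : (i * q) * g = i * kk := by rw [hq]; ring
          rw [he2]
          exact hdvd
        exact (mul_dvd_mul_iff_right (by omega : (g : ℕ) ≠ 0)).mp h2
      have hcop : Nat.Coprime (m / g) ((r ^ n₁ - 1) / g) :=
        Nat.coprime_div_gcd_div_gcd hgpos
      have hqe : q = (r ^ n₁ - 1) / g := by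
        rw [hkk1, hq, Nat.mul_div_cancel_left _ hgpos]
      exact (hqe ▸ hcop).dvd_of_dvd_mul_right hmg
  apply le_antisymm
  · -- centralizer ≤ closure
    intro x hx
    rw [mem_centralizer_pair_iff] at hx
    obtain ⟨h1, h2⟩ := hx
    obtain ⟨i, j, rfl⟩ := ZM_decomp hgen hNa x
    have hbj : a ^ m₁ * b ^ j = b ^ j * a ^ m₁ := by
      have h := h1.eq
      rw [← mul_assoc, pow_mul_comm, mul_assoc, mul_assoc] at h
      exact mul_left_cancel h
    have hjcond : t ∣ j := by
      apply hjt
      have h := hbj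
      rw [ZM_comm hrel m₁ j] at h
      have h' := mul_left_cancel h
      have hmod' : m₁ * r ^ j ≡ m₁ * 1 [MOD m] := by
        rw [mul_one, ← ha]
        exact (pow_eq_pow_iff_modEq).mp h'
      exact (hscale _ _).mp hmod'
    have hicond : m / g ∣ i := by
      apply hIdvd
      have h := h2.eq
      have hR : (a ^ i * b ^ j) * b ^ n₁ = b ^ n₁ * a ^ (i * r ^ n₁) * b ^ j := by
        rw [mul_assoc, ← pow_add, add_comm j n₁, pow_add, ← mul_assoc,
          ZM_comm hrel i n₁]
      rw [hR, ← mul_assoc] at h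
      have h' := mul_right_cancel h
      have h'' := mul_left_cancel h'
      have := (pow_eq_pow_iff_modEq).mp h''.symm
      rwa [ha] at this
    have hmem1 : a ^ i ∈ Subgroup.closure ({a ^ (m / g), b ^ t} : Set G) := by
      obtain ⟨c, hc⟩ := hicond
      rw [hc, pow_mul]
      exact Subgroup.pow_mem _ (Subgroup.subset_closure (Set.mem_insert _ _)) c
    have hgen2 : b ^ t ∈ ({a ^ (m / g), b ^ t} : Set G) :=
      Set.mem_insert_of_mem _ (Set.mem_singleton _)
    have hmem2 : b ^ j ∈ Subgroup.closure ({a ^ (m / g), b ^ t} : Set G) := by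
      obtain ⟨c, hc⟩ := hjcond
      rw [hc, pow_mul]
      exact Subgroup.pow_mem _ (Subgroup.subset_closure hgen2) c
    exact Subgroup.mul_mem _ hmem1 hmem2
  · -- closure ≤ centralizer
    rw [Subgroup.closure_le]
    refine Set.insert_subset_iff.mpr ⟨?_, Set.singleton_subset_iff.mpr ?_⟩
    · rw [SetLike.mem_coe, mem_centralizer_pair_iff]
      constructor
      · exact (Commute.refl a).pow_pow m₁ (m / g)
      · show b ^ n₁ * a ^ (m / g) = a ^ (m / g) * b ^ n₁
        rw [ZM_comm hrel (m / g) n₁]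
        congr 1
        rw [pow_eq_pow_iff_modEq, ha]
        exact hC2mod.symm
    · rw [SetLike.mem_coe, mem_centralizer_pair_iff]
      constructor
      · show a ^ m₁ * b ^ t = b ^ t * a ^ m₁
        rw [ZM_comm hrel m₁ t]
        congr 1
        rw [pow_eq_pow_iff_modEq, ha]
        have := (hscale (r ^ t) 1).mpr htpow
        rwa [mul_one] at this
      · exact (Commute.refl b).pow_pow n₁ t

end ZMaux

/-- The Chermak–Delgado measure of `⟨a^{m₁}, b^{n₁}⟩` in `ZM(m,n,r)` equals
`m n² gcd(m, r^{n₁}-1) / (m₁ n₁ ord_{m/m₁}(r))` (stated multiplicatively). -/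
theorem stmt_8 {G : Type*} [Group G] [Finite G]
    (m n r : ℕ) (hm : 0 < m) (hn : 0 < n)
    (hgcd1 : Nat.gcd m n = 1) (hgcd2 : Nat.gcd m (r - 1) = 1)
    (hrn : r ^ n % m = 1 % m)
    (a b : G) (ha : orderOf a = m) (hb : orderOf b = n)
    (hrel : b⁻¹ * a * b = a ^ r)
    (hgen : Subgroup.closure {a, b} = ⊤)
    (hcard : Nat.card G = m * n)
    (m₁ n₁ : ℕ) (hm₁ : m₁ ∣ m) (hn₁ : n₁ ∣ n)
    (H : Subgroup G) (hH : H = Subgroup.closure {a ^ m₁, b ^ n₁}) :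
    Nat.card H * Nat.card (Subgroup.centralizer (H : Set G)) *
        (m₁ * n₁ * ordMod (m / m₁) r) =
      m * n ^ 2 * Nat.gcd m (r ^ n₁ - 1) := by
  subst hH
  set g := Nat.gcd m (r ^ n₁ - 1) with hgdef
  set t := ordMod (m / m₁) r with htdef
  have hmod : r ^ n ≡ 1 [MOD m] := hrn
  have hgm : g ∣ m := Nat.gcd_dvd_left _ _
  have hmg : m / g ∣ m := Nat.div_dvd_of_dvd hgm
  have htn : t ∣ n := by
    apply orderOf_dvd_of_pow_eq_one
    have h : r ^ n ≡ 1 [MOD m / m₁] := hmod.of_dvd (Nat.div_dvd_of_dvd hm₁)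
    have := (ZMod.natCast_eq_natCast_iff _ _ _).mpr h
    push_cast at this
    exact this
  have ht0 : t ≠ 0 := by
    intro h0
    rw [h0] at htn
    omega
  have hcardH : Nat.card (Subgroup.closure {a ^ m₁, b ^ n₁} : Subgroup G)
      = (m / m₁) * (n / n₁) :=
    ZM_card_closure hm hn hgcd1 ha hb hm₁ hn₁ (ZM_normal hn ha hrel hrn hgen m₁)
  have hcent := ZM_centralizer hm hn ha hb hrel hrn hgen hm₁ hn₁
  have hcardC : Nat.card
      (Subgroup.centralizer ((Subgroup.closure {a ^ m₁, b ^ n₁} : Subgroup G) : Set G))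
      = g * (n / t) := by
    rw [hcent, ZM_card_closure hm hn hgcd1 ha hb hmg htn
      (ZM_normal hn ha hrel hrn hgen (m / g)), Nat.div_div_self hgm hm.ne']
  rw [hcardH, hcardC]
  -- arithmetic
  have hm₁0 : m₁ ≠ 0 := fun h => by subst h; simp at hm₁; omega
  have hn₁0 : n₁ ≠ 0 := fun h => by subst h; simp at hn₁; omega
  have e1 : m / m₁ * m₁ = m := Nat.div_mul_cancel hm₁
  have e2 : n / n₁ * n₁ = n := Nat.div_mul_cancel hn₁
  have e3 : n / t * t = n := Nat.div_mul_cancel htn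
  have hrhs : m * n ^ 2 * g = (m / m₁ * m₁) * ((n / n₁ * n₁) * (n / t * t)) * g := by
    rw [e1, e2, e3]
    ring
  rw [hrhs]
  ring
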